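/- For every natural number m and every z ∈ ℂ with |z| = πm + π/6, one has |e^{−|Im z|} sin z| ≥ 1/4. -/

import Mathlib

set_option maxHeartbeats 1000000

open Complex Real

lemma absSin_sq (z : ℂ) :
    (‖Complex.sin z‖)^2 = Real.sin z.re ^ 2 + Real.sinh z.im ^ 2 := by
  rw [Complex.sq_norm, Complex.sin_eq]
  simp only [← Complex.ofReal_sin, ← Complex.ofReal_cos, ← Complex.ofReal_cosh,
    ← Complex.ofReal_sinh, Complex.normSq_apply, Complex.add_re, Complex.add_im,
    Complex.ofReal_re, Complex.ofReal_im, Complex.mul_re, Complex.mul_im,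
    Complex.mul_I_re, Complex.mul_I_im, Complex.I_re, Complex.I_im]
  nlinarith [Real.sin_sq_add_cos_sq z.re, Real.cosh_sq z.im]

/-- On the circle `|z| = πm + π/6` one has `|e^{-|Im z|} sin z| ≥ 1/4`. -/
theorem sin_lower_bound_on_circles (m : ℕ) (z : ℂ)
    (hz : ‖z‖ = Real.pi * m + Real.pi / 6) :
    1 / 4 ≤ Real.exp (-|z.im|) * ‖Complex.sin z‖ := by
  set x := z.re with hxdef
  set y := z.im with hydef
  have hpi1 : (3.141592 : ℝ) < Real.pi := Real.pi_gt_d6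
  have hpi2 : Real.pi < 3.1416 := Real.pi_lt_d6.trans (by norm_num)
  have hm0 : (0:ℝ) ≤ (m:ℝ) := Nat.cast_nonneg m
  have hr : (0:ℝ) < Real.pi * m + Real.pi / 6 := by nlinarith
  have hxy : x^2 + y^2 = (Real.pi * m + Real.pi/6)^2 := by
    have h := Complex.sq_norm z
    rw [hz, Complex.normSq_apply] at h
    nlinarith [h]
  have hA := absSin_sq z
  have hexp : 0 < Real.exp (-|y|) := Real.exp_pos _
  have habsz : 0 ≤ ‖Complex.sin z‖ := norm_nonneg _
  have hlog2 : Real.log 2 < 0.6931472 := by linarith [Real.log_two_lt_d9]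
  have hlog2' : (0.6931471:ℝ) < Real.log 2 := by linarith [Real.log_two_gt_d9]
  have hhalf : Real.exp (-(Real.log 2)) = 1/2 := by
    rw [Real.exp_neg, Real.exp_log two_pos]; norm_num
  by_cases hy : Real.log 2 / 2 ≤ |y|
  · -- large imaginary part: use sinh
    have h1 : Real.sinh |y| ≤ ‖Complex.sin z‖ := by
      have hs : (Real.sinh |y|)^2 ≤ (‖Complex.sin z‖)^2 := by
        rw [hA, ← Real.abs_sinh]
        nlinarith [_root_.sq_abs (Real.sinh y), sq_nonneg (Real.sin x)]
      nlinarith [Real.sinh_nonneg_iff.2 (abs_nonneg y)]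
    have h2 : Real.exp (-|y|) * Real.exp |y| = 1 := by
      rw [← Real.exp_add]; simp
    have h3 : Real.exp (-|y|) ^ 2 ≤ 1/2 := by
      have he : Real.exp (-|y|) ^ 2 = Real.exp (-(2*|y|)) := by
        rw [sq, ← Real.exp_add]; congr 1; ring
      have hm : Real.exp (-(2*|y|)) ≤ Real.exp (-(Real.log 2)) :=
        Real.exp_le_exp.2 (by linarith)
      rw [he]; rw [hhalf] at hm; exact hm
    have h4 : 1/4 ≤ Real.exp (-|y|) * Real.sinh |y| := by
      rw [Real.sinh_eq]
      nlinarith [h2, h3, hexp]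
    calc 1/4 ≤ Real.exp (-|y|) * Real.sinh |y| := h4
      _ ≤ Real.exp (-|y|) * ‖Complex.sin z‖ :=
        mul_le_mul_of_nonneg_left h1 hexp.le
  · push_neg at hy
    have hy2 : y^2 < 0.1205 := by nlinarith [_root_.sq_abs y, abs_nonneg y]
    have habsx : 0 ≤ |x| := abs_nonneg x
    -- lower bound on |sin x|
    have hsinx : (0.36:ℝ) ≤ |Real.sin x| := by
      have hkey : (0.36:ℝ) ≤ _root_.abs (Real.sin |x|) := by
        rcases Nat.eq_zero_or_pos m with hm | hm
        · subst hm
          rw [Nat.cast_zero, mul_zero, zero_add] at hxy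
          have hx1 : (0.39:ℝ) < |x| := by
            nlinarith [_root_.sq_abs x, habsx]
          have hsq : |x|^2 ≤ 0.2809 := by
            nlinarith [_root_.sq_abs x, sq_nonneg y]
          have hx2 : |x| ≤ 1 := by nlinarith
          have hsin := Real.sin_gt_sub_cube (x := |x|) (by linarith)
          have : (0.36:ℝ) ≤ Real.sin |x| := by
            linarith [mul_le_mul_of_nonneg_left hsq habsx]
          linarith [le_abs_self (Real.sin |x|)]
        · have hm1 : (1:ℝ) ≤ (m:ℝ) := by exact_mod_cast hm
          have hr36 : (3.66:ℝ) < Real.pi * m + Real.pi/6 := by nlinarith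
          have hxr : |x| ≤ Real.pi * m + Real.pi/6 := by
            nlinarith [_root_.sq_abs x, habsx, sq_nonneg y]
          have hgap : (Real.pi * m + Real.pi/6) - |x| < 0.033 := by
            nlinarith [_root_.sq_abs x]
          set t := |x| - Real.pi * m with htdef
          have ht1 : (0.49:ℝ) < t := by rw [htdef]; linarith
          have ht2 : t ≤ 0.524 := by rw [htdef]; linarith
          have hxt : |x| = t + (m:ℝ) * Real.pi := by rw [htdef]; ring
          have hsin : Real.sin |x| = (-1)^m * Real.sin t := by
            rw [hxt]; exact_mod_cast Real.sin_add_nat_mul_pi t m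
          have hst := Real.sin_gt_sub_cube (by linarith : (0:ℝ) < t)
          have hsqt : t^2 ≤ 0.2746 := by nlinarith
          have hst2 : (0.36:ℝ) ≤ Real.sin t := by
            nlinarith [mul_le_mul_of_nonneg_left hsqt (by linarith : (0:ℝ) ≤ t)]
          rw [hsin, abs_mul, _root_.abs_pow, abs_neg, abs_one, one_pow, one_mul]
          linarith [le_abs_self (Real.sin t)]
      have heq : _root_.abs (Real.sin |x|) = |Real.sin x| := by
        rcases abs_cases x with ⟨h, _⟩ | ⟨h, _⟩ <;> rw [h] <;> simp [Real.sin_neg]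
      linarith [heq ▸ hkey]
    -- lower bound on |sin z|
    have hsz : (0.36:ℝ) ≤ ‖Complex.sin z‖ := by
      nlinarith [sq_nonneg (Real.sinh y), _root_.sq_abs (Real.sin x)]
    -- lower bound on exp
    have hexp2 : (1/2:ℝ) ≤ Real.exp (-|y|) ^ 2 := by
      have he : Real.exp (-|y|) ^ 2 = Real.exp (-(2*|y|)) := by
        rw [sq, ← Real.exp_add]; congr 1; ring
      have hm : Real.exp (-(Real.log 2)) ≤ Real.exp (-(2*|y|)) :=
        Real.exp_le_exp.2 (by linarith)
      rw [he]; rw [hhalf] at hm; exact hm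
    have ha : (0.7:ℝ) < Real.exp (-|y|) := by nlinarith [hexp2, hexp]
    linarith [mul_le_mul ha.le hsz (by norm_num) hexp.le]
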